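/- Let $X$ be a cyclically ordered finite set and let $M: X \to X$ be defined from a function $\sigma$ by: $M(a)$ is the last element $m$ of the cyclic sequence $a+1,\dots,a-1$ with $\sigma(m) \prec a \prec m$. Then: (1) $a \prec b \prec M(a)$ implies $b \prec M(a) \preceq M(b)$; (2) $M(a) \prec b \prec a$ implies $M(b) \preceq M(a) \prec b$. -/

import Mathlib

open Finset

/-- Position of `b` relative to `a` in the clockwise cyclic order on `ZMod n`
(number of clockwise steps from `a` to `b`). -/
def cpos {n : ℕ} (a b : ZMod n) : ℕ := (b - a).val

/-- `a ≺ b ≺ c` in the cyclic order. -/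
def btwSS {n : ℕ} (a b c : ZMod n) : Prop := 0 < cpos a b ∧ cpos a b < cpos a c

/-- `a ≺ b ⪯ c` in the cyclic order. -/
def btwSW {n : ℕ} (a b c : ZMod n) : Prop := 0 < cpos a b ∧ cpos a b ≤ cpos a c

/-- `a ⪯ b ≺ c` in the cyclic order. -/
def btwWS {n : ℕ} (a b c : ZMod n) : Prop := cpos a b < cpos a c

/-- `a ⪯ b ⪯ c` in the cyclic order. -/
def btwWW {n : ℕ} (a b c : ZMod n) : Prop := cpos a b ≤ cpos a c

/-- Circular sum `⊕∑_{i=a}^{b} f i`: the sum of `f` over the indices from `a` to `b`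
inclusive, traversed cyclically (wrapping around mod `n`). -/
noncomputable def csum {n : ℕ} (f : ZMod n → ℝ) (a b : ZMod n) : ℝ :=
  ∑ k ∈ Finset.range ((b - a).val + 1), f (a + (k : ZMod n))

/-- The circular decomposable metric determined by isolation indices `α`:
`d a b = ⊕∑_{i=a+1}^{b} ⊕∑_{j=b+1}^{a} α i j` for `a ≠ b`, and `d a a = 0`. -/
noncomputable def dd {n : ℕ} (α : ZMod n → ZMod n → ℝ) (a b : ZMod n) : ℝ :=
  if a = b then 0 else csum (fun i => csum (fun j => α i j) (b + 1) a) (a + 1) b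

/-- For `M` defined from `σ` (the last `m` in the cyclic sequence `a+1, …, a-1` with
`σ(m) ≺ a ≺ m`): (1) `a ≺ b ≺ M(a)` implies `b ≺ M(a) ⪯ M(b)`;
(2) `M(a) ≺ b ≺ a` implies `M(b) ⪯ M(a) ≺ b`. -/

lemma cpos_lt {n : ℕ} [NeZero n] (a b : ZMod n) : cpos a b < n := ZMod.val_lt _

lemma cpos_self {n : ℕ} [NeZero n] (a : ZMod n) : cpos a a = 0 := by
  simp [cpos]

lemma cpos_add {n : ℕ} [NeZero n] (a b c : ZMod n) :
    cpos a c = cpos a b + cpos b c ∨ cpos a c + n = cpos a b + cpos b c := by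
  have h : (c - a) = (b - a) + (c - b) := by ring
  have h1 : cpos a c = (cpos a b + cpos b c) % n := by
    unfold cpos; rw [h, ZMod.val_add]
  have b1 : cpos a b < n := cpos_lt a b
  have b2 : cpos b c < n := cpos_lt b c
  rcases Nat.lt_or_ge (cpos a b + cpos b c) n with h' | h'
  · left; rw [h1, Nat.mod_eq_of_lt h']
  · right
    rw [h1, Nat.mod_eq_sub_mod h', Nat.mod_eq_of_lt (by omega)]
    omega

theorem stmt9 {n : ℕ} [NeZero n] (σ M : ZMod n → ZMod n)
    (hM : ∀ a : ZMod n, btwSS (σ (M a)) a (M a) ∧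
      ∀ m : ZMod n, cpos a (M a) < cpos a m → ¬ btwSS (σ m) a m) :
    (∀ a b : ZMod n, btwSS a b (M a) → btwSW b (M a) (M b)) ∧
    (∀ a b : ZMod n, btwSS (M a) b a → btwWS (M b) (M a) b) := by
  constructor
  · intro a b hab
    obtain ⟨h2, hmax_b⟩ := hM b
    simp only [btwSS, btwSW] at *
    have F1 := cpos_add (σ (M a)) a b
    have F2 := cpos_add (σ (M a)) a (M a)
    have F3 := cpos_add a b (M a)
    have h1 := (hM a).1
    have h1 : 0 < cpos (σ (M a)) a ∧ cpos (σ (M a)) a < cpos (σ (M a)) (M a) := h1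
    have b1 := cpos_lt (σ (M a)) a
    have b2 := cpos_lt (σ (M a)) b
    have b3 := cpos_lt (σ (M a)) (M a)
    have b4 := cpos_lt a b
    have b5 := cpos_lt a (M a)
    have b6 := cpos_lt b (M a)
    constructor
    · omega
    · by_contra hc
      push_neg at hc
      exact hmax_b (M a) hc ⟨by omega, by omega⟩
  · intro a b hab
    obtain ⟨h1, hmax_a⟩ := hM a
    have h2 := (hM b).1
    simp only [btwSS, btwWS] at *
    by_contra hc
    push_neg at hc
    have cs := cpos_self a
    have B1 := cpos_add (M a) a b
    have B2 := cpos_add a (M a) a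
    have B3 := cpos_add (M b) a b
    have B4 := cpos_add (M b) a (M a)
    have B5 := cpos_add a (M b) a
    have C1 := cpos_add (σ (M b)) a b
    have C2 := cpos_add (σ (M b)) a (M b)
    have D1 := cpos_add a (σ (M b)) a
    have b1 := cpos_lt a b
    have b2 := cpos_lt a (M a)
    have b3 := cpos_lt a (M b)
    have b4 := cpos_lt a (σ (M b))
    have b5 := cpos_lt (M a) a
    have b6 := cpos_lt (M a) b
    have b7 := cpos_lt (M b) a
    have b8 := cpos_lt (M b) b
    have b9 := cpos_lt (M b) (M a)
    have b10 := cpos_lt (σ (M b)) a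
    have b11 := cpos_lt (σ (M b)) b
    have b12 := cpos_lt (σ (M b)) (M b)
    exact hmax_a (M b) (by omega) ⟨by omega, by omega⟩
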